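/- Let K be an n-by-n symmetric positive semi-definite matrix, λ > 0, and S an n-by-d matrix such that S^T K S is invertible. Define K_S = K S (S^T K S)^{-1} S^T K. Then K_S is symmetric positive semi-definite, and (K_S + nλ I_n)^{-1} exists; moreover, by the Woodbury identity, K_S (K_S + nλ I_n)^{-1} Y = K S (S^T K^2 S + nλ S^T K S)^{-1} S^T K Y for every Y in R^n. -/

import Mathlib

open Matrix

lemma posDef_of_posSemidef_isUnit {n : ℕ} {A : Matrix (Fin n) (Fin n) ℝ}
    (hA : A.PosSemidef) (h : IsUnit A) : A.PosDef := by
  refine Matrix.PosDef.of_dotProduct_mulVec_pos hA.1 fun x hx => ?_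
  rcases lt_or_eq_of_le (hA.dotProduct_mulVec_nonneg x) with hpos | heq
  · simpa using hpos
  · exfalso
    have h0 : A *ᵥ x = 0 := (hA.dotProduct_mulVec_zero_iff x).mp (by simpa using heq.symm)
    have hdet : IsUnit A.det := (Matrix.isUnit_iff_isUnit_det A).mp h
    have : x = 0 := by
      have := congrArg (fun v => A⁻¹ *ᵥ v) h0
      simpa [Matrix.mulVec_mulVec, Matrix.nonsing_inv_mul A hdet] using this
    exact hx this

/-- For symmetric PSD `K`, `λ > 0`, and `S` with `SᵀKS` invertible,
`K_S = K S (SᵀKS)⁻¹ Sᵀ K` is symmetric PSD, `K_S + nλI` is invertible, and the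
Woodbury identity gives
`K_S (K_S + nλI)⁻¹ Y = K S (SᵀK²S + nλ SᵀKS)⁻¹ Sᵀ K Y` for all `Y`. -/
theorem sketch_woodbury (n d : ℕ) (hn : 0 < n) (lam : ℝ) (hlam : 0 < lam)
    (K : Matrix (Fin n) (Fin n) ℝ) (hK : K.PosSemidef)
    (S : Matrix (Fin n) (Fin d) ℝ) (hS : IsUnit (Sᵀ * K * S)) :
    (K * S * (Sᵀ * K * S)⁻¹ * Sᵀ * K).PosSemidef
  ∧ IsUnit ((K * S * (Sᵀ * K * S)⁻¹ * Sᵀ * K) +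
      ((n : ℝ) * lam) • (1 : Matrix (Fin n) (Fin n) ℝ))
  ∧ ∀ Y : Fin n → ℝ,
      ((K * S * (Sᵀ * K * S)⁻¹ * Sᵀ * K) *
          ((K * S * (Sᵀ * K * S)⁻¹ * Sᵀ * K) +
            ((n : ℝ) * lam) • (1 : Matrix (Fin n) (Fin n) ℝ))⁻¹).mulVec Y
        = (K * S * (Sᵀ * K * K * S + ((n : ℝ) * lam) • (Sᵀ * K * S))⁻¹ * Sᵀ * K).mulVec Y := by
  have hc : 0 < (n : ℝ) * lam := mul_pos (by exact_mod_cast hn) hlam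
  set c : ℝ := (n : ℝ) * lam with hcdef
  have hKt : Kᵀ = K := hK.isHermitian.eq
  -- SᵀKS is PSD, hence PosDef since invertible
  have hSKS_psd : (Sᵀ * K * S).PosSemidef := by
    have := hK.conjTranspose_mul_mul_same S
    simpa [conjTranspose_eq_transpose_of_trivial] using this
  have hSKS : (Sᵀ * K * S).PosDef := posDef_of_posSemidef_isUnit hSKS_psd hS
  have hA : ((Sᵀ * K * S)⁻¹).PosDef := hSKS.inv
  -- K_S is PSD
  have hKS_psd : (K * S * (Sᵀ * K * S)⁻¹ * Sᵀ * K).PosSemidef := by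
    have := hA.posSemidef.mul_mul_conjTranspose_same (K * S)
    have he : (K * S)ᴴ = Sᵀ * K := by
      rw [conjTranspose_eq_transpose_of_trivial, transpose_mul, hKt]
    rw [he] at this
    simpa [Matrix.mul_assoc] using this
  -- invertibility of K_S + cI
  have hcI : ((c : ℝ) • (1 : Matrix (Fin n) (Fin n) ℝ)).PosDef := by
    rw [Matrix.smul_one_eq_diagonal]
    exact Matrix.PosDef.diagonal fun _ => hc
  have hP : ((K * S * (Sᵀ * K * S)⁻¹ * Sᵀ * K) + c • (1 : Matrix (Fin n) (Fin n) ℝ)).PosDef :=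
    Matrix.PosDef.posSemidef_add hKS_psd hcI
  refine ⟨hKS_psd, hP.isUnit, fun Y => ?_⟩
  -- M2 = SᵀK²S + c SᵀKS is PosDef
  have hM2 : (Sᵀ * K * K * S + c • (Sᵀ * K * S)).PosDef := by
    have h1 : (Sᵀ * K * K * S).PosSemidef := by
      have := Matrix.posSemidef_conjTranspose_mul_self (K * S)
      have he : (K * S)ᴴ = Sᵀ * K := by
        rw [conjTranspose_eq_transpose_of_trivial, transpose_mul, hKt]
      rw [he] at this
      simpa [Matrix.mul_assoc] using this
    have h2 : (c • (Sᵀ * K * S)).PosDef := by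
      refine Matrix.PosDef.of_dotProduct_mulVec_pos ?_ fun x hx => ?_
      · rw [IsHermitian, conjTranspose_smul, hSKS.1.eq]
        simp
      · have := hSKS.dotProduct_mulVec_pos hx
        simp only [Matrix.smul_mulVec, dotProduct_smul, smul_eq_mul]
        exact mul_pos hc this
    exact Matrix.PosDef.posSemidef_add h1 h2
  have hdetSKS : IsUnit (Sᵀ * K * S).det := (Matrix.isUnit_iff_isUnit_det _).mp hS
  have hdetM2 : IsUnit (Sᵀ * K * K * S + c • (Sᵀ * K * S)).det :=
    (Matrix.isUnit_iff_isUnit_det _).mp hM2.isUnit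
  have hdetP : IsUnit ((K * S * (Sᵀ * K * S)⁻¹ * Sᵀ * K) + c • (1 : Matrix (Fin n) (Fin n) ℝ)).det :=
    (Matrix.isUnit_iff_isUnit_det _).mp hP.isUnit
  suffices hmat : (K * S * (Sᵀ * K * S)⁻¹ * Sᵀ * K) *
      ((K * S * (Sᵀ * K * S)⁻¹ * Sᵀ * K) + c • (1 : Matrix (Fin n) (Fin n) ℝ))⁻¹
      = K * S * (Sᵀ * K * K * S + c • (Sᵀ * K * S))⁻¹ * Sᵀ * K by
    rw [hmat]
  -- key computation: RHS * P = K_S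
  set P := (K * S * (Sᵀ * K * S)⁻¹ * Sᵀ * K) + c • (1 : Matrix (Fin n) (Fin n) ℝ) with hPdef
  set M2 := Sᵀ * K * K * S + c • (Sᵀ * K * S) with hM2def
  have key : K * S * M2⁻¹ * Sᵀ * K * P = K * S * (Sᵀ * K * S)⁻¹ * Sᵀ * K := by
    have expand : Sᵀ * K * P = M2 * ((Sᵀ * K * S)⁻¹ * (Sᵀ * K)) := by
      rw [hPdef, hM2def]
      have h2 : c • (Sᵀ * K * S) * ((Sᵀ * K * S)⁻¹ * (Sᵀ * K)) = c • (Sᵀ * K) := by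
        rw [Matrix.smul_mul, ← Matrix.mul_assoc, Matrix.mul_nonsing_inv _ hdetSKS,
          Matrix.one_mul]
      rw [Matrix.add_mul, h2, Matrix.mul_add]
      congr 1
      · simp only [Matrix.mul_assoc]
      · simp [Matrix.mul_smul, Matrix.smul_mul, Matrix.mul_one]
    calc K * S * M2⁻¹ * Sᵀ * K * P
        = K * S * (M2⁻¹ * (Sᵀ * K * P)) := by simp only [Matrix.mul_assoc]
      _ = K * S * (M2⁻¹ * (M2 * ((Sᵀ * K * S)⁻¹ * (Sᵀ * K)))) := by rw [expand]
      _ = K * S * ((Sᵀ * K * S)⁻¹ * (Sᵀ * K)) := by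
          rw [← Matrix.mul_assoc M2⁻¹, Matrix.nonsing_inv_mul _ hdetM2, Matrix.one_mul]
      _ = K * S * (Sᵀ * K * S)⁻¹ * Sᵀ * K := by simp only [Matrix.mul_assoc]
  calc (K * S * (Sᵀ * K * S)⁻¹ * Sᵀ * K) * P⁻¹
      = (K * S * M2⁻¹ * Sᵀ * K * P) * P⁻¹ := by rw [key]
    _ = K * S * M2⁻¹ * Sᵀ * K * (P * P⁻¹) := by simp only [Matrix.mul_assoc]
    _ = K * S * M2⁻¹ * Sᵀ * K := by rw [Matrix.mul_nonsing_inv _ hdetP, Matrix.mul_one]
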